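/- arXiv:2007.10238 — 3 statements merged into one kernel-verified Lean document; each statement's English description precedes it below -/
import Mathlib

section
/- Conservation of mass under the continuity equation: let T > 0, let S : ℝ × E → ℝ and v : ℝ × E → E be continuously differentiable (ContDiff ℝ 1 on ℝ × E), and suppose there is a compact set K ⊆ E such that S (t, x) = 0 for all t ∈ [0,T] and all x ∉ K. If the continuity equation holds on [0,T] × E, i.e. ∂ₜS(t,x) + div (fun y => S (t,y) • v (t,y)) x = 0 for all t ∈ [0,T] and x ∈ E, then the total mass t ↦ ∫ x, S (t, x) (Lebesgue integral over E) is constant on [0,T]. -/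
open MeasureTheory Set

/-- The divergence of a vector field `u` at `x`: the trace of its Fréchet derivative. -/
noncomputable def vdiv {d : ℕ} (u : EuclideanSpace ℝ (Fin d) → EuclideanSpace ℝ (Fin d))
    (x : EuclideanSpace ℝ (Fin d)) : ℝ :=
  LinearMap.trace ℝ (EuclideanSpace ℝ (Fin d))
    (fderiv ℝ u x : EuclideanSpace ℝ (Fin d) →ₗ[ℝ] EuclideanSpace ℝ (Fin d))

lemma trace_pi (m : ℕ) (h : (Fin m → ℝ) →ₗ[ℝ] (Fin m → ℝ)) :
    LinearMap.trace ℝ _ h = ∑ i, h (Pi.single i 1) i := by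
  rw [LinearMap.trace_eq_matrix_trace ℝ (Pi.basisFun ℝ (Fin m))]
  simp [Matrix.trace, Matrix.diag, LinearMap.toMatrix_apply]

lemma divclean (n : ℕ) (g : (Fin (n+1) → ℝ) → Fin (n+1) → ℝ) (hg : ContDiff ℝ 1 g)
    (K' : Set (Fin (n+1) → ℝ)) (hK' : IsCompact K') (h0 : ∀ x ∉ K', g x = 0) :
    ∫ x, ∑ i, fderiv ℝ g x (Pi.single i 1) i = 0 := by
  obtain ⟨R, hR0, hRK⟩ : ∃ R > 0, K' ⊆ Metric.ball 0 R := by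
    obtain ⟨R, hR⟩ := hK'.isBounded.subset_ball 0
    exact ⟨max R 1, lt_of_lt_of_le one_pos (le_max_right _ _),
      hR.trans (Metric.ball_subset_ball (le_max_left _ _))⟩
  set D : (Fin (n+1) → ℝ) → ℝ := fun x => ∑ i, fderiv ℝ g x (Pi.single i 1) i with hD
  have hDzero : ∀ x ∉ K', D x = 0 := by
    intro x hx
    have hev : g =ᶠ[nhds x] (fun _ => 0) := by
      filter_upwards [hK'.isClosed.isOpen_compl.mem_nhds hx] with y hy
      exact h0 y hy
    have : fderiv ℝ g x = 0 := by
      rw [hev.fderiv_eq]; exact fderiv_const_apply _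
    simp [hD, this]
  have hDcont : Continuous D := by
    have h1 : Continuous (fderiv ℝ g) := (hg.fderiv_right (m := 0) le_rfl).continuous
    exact continuous_finset_sum _ fun i _ =>
      (continuous_apply i).comp (h1.clm_apply continuous_const)
  have hDsupp : HasCompactSupport D :=
    HasCompactSupport.intro hK' hDzero
  have hDint : Integrable D := hDcont.integrable_of_hasCompactSupport hDsupp
  -- box
  set a : Fin (n+1) → ℝ := fun _ => -R
  set b : Fin (n+1) → ℝ := fun _ => R
  have hball : ∀ x : Fin (n+1) → ℝ, (∃ i, R ≤ |x i|) → x ∉ K' := by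
    intro x ⟨i, hi⟩ hx
    have := hRK hx
    rw [Metric.mem_ball, dist_zero_right] at this
    exact absurd (lt_of_le_of_lt (hi.trans (norm_le_pi_norm x i)) this) (lt_irrefl _)
  have key := MeasureTheory.integral_divergence_of_hasFDerivAt_off_countable a b
    (fun i => le_of_lt (by simp [a, b]; linarith))
    g (fun x => fderiv ℝ g x) ∅ countable_empty
    (hg.continuous.continuousOn)
    (fun x _ => (hg.differentiable one_ne_zero x).hasFDerivAt)
    hDint.integrableOn
  have hfaces : ∀ i : Fin (n+1),
      ((∫ x in Icc (a ∘ i.succAbove) (b ∘ i.succAbove), g (i.insertNth (b i) x) i) -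
        ∫ x in Icc (a ∘ i.succAbove) (b ∘ i.succAbove), g (i.insertNth (a i) x) i) = 0 := by
    intro i
    have hz : ∀ (c : ℝ), |c| = R → ∀ x, g (i.insertNth c x) i = 0 := by
      intro c hc x
      rw [h0 _ (hball _ ⟨i, by simp [hc.symm.le, Fin.insertNth_apply_same]⟩)]; rfl
    rw [integral_congr_ae (Filter.Eventually.of_forall fun x => hz (b i) (by simp [b, abs_of_pos hR0]) x),
      integral_congr_ae (Filter.Eventually.of_forall fun x => hz (a i) (by simp [a, abs_of_pos hR0]) x)]
    simp
  rw [Finset.sum_eq_zero (fun i _ => hfaces i)] at key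
  have hKIcc : K' ⊆ Icc a b := by
    intro x hx
    have hb := hRK hx
    rw [Metric.mem_ball, dist_zero_right] at hb
    constructor <;> intro i <;>
      have := (abs_lt.1 (lt_of_le_of_lt (norm_le_pi_norm x i) hb)) <;>
      simp only [a, b] <;> linarith [this.1, this.2]
  rw [← key, ← hD]
  exact (setIntegral_eq_integral_of_forall_compl_eq_zero (s := Icc a b) fun x hx =>
    hDzero x fun hxK => hx (hKIcc hxK)).symm

lemma divE {n : ℕ} (u : EuclideanSpace ℝ (Fin (n+1)) → EuclideanSpace ℝ (Fin (n+1)))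
    (hu : ContDiff ℝ 1 u) (K : Set (EuclideanSpace ℝ (Fin (n+1)))) (hK : IsCompact K)
    (h0 : ∀ x ∉ K, u x = 0) : ∫ x, vdiv u x = 0 := by
  set eL : EuclideanSpace ℝ (Fin (n+1)) ≃L[ℝ] (Fin (n+1) → ℝ) :=
    (EuclideanSpace.equiv (Fin (n+1)) ℝ) with heL
  set g : (Fin (n+1) → ℝ) → (Fin (n+1) → ℝ) := fun y => eL (u (eL.symm y)) with hg
  have hgc : ContDiff ℝ 1 g :=
    (eL.contDiff).comp (hu.comp eL.symm.contDiff)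
  have hgK : ∀ y ∉ eL '' K, g y = 0 := by
    intro y hy
    have : eL.symm y ∉ K := fun h => hy ⟨eL.symm y, h, by simp⟩
    simp [hg, h0 _ this]
  have hfd : ∀ y, fderiv ℝ g y =
      (eL : EuclideanSpace ℝ (Fin (n+1)) →L[ℝ] (Fin (n+1) → ℝ)).comp
        ((fderiv ℝ u (eL.symm y)).comp (eL.symm : (Fin (n+1) → ℝ) →L[ℝ] _)) := by
    intro y
    have : g = ⇑eL ∘ (u ∘ ⇑eL.symm) := rfl
    rw [this, ContinuousLinearEquiv.comp_fderiv, ContinuousLinearEquiv.comp_right_fderiv]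
  have htr : ∀ y, vdiv u (eL.symm y) = ∑ i, fderiv ℝ g y (Pi.single i 1) i := by
    intro y
    have h2 : ((fderiv ℝ g y : (Fin (n+1) → ℝ) →ₗ[ℝ] (Fin (n+1) → ℝ)))
        = eL.toLinearEquiv.conj (fderiv ℝ u (eL.symm y) : _ →ₗ[ℝ] _) := by
      ext w
      rw [hfd]
      simp only [LinearEquiv.conj_apply, ContinuousLinearMap.coe_comp',
        Function.comp_apply, LinearMap.coe_comp, ContinuousLinearMap.coe_coe,
        LinearEquiv.coe_coe, ContinuousLinearEquiv.coe_toLinearEquiv]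
      rfl
    rw [show (∑ i, fderiv ℝ g y (Pi.single i 1) i)
        = LinearMap.trace ℝ _ ((fderiv ℝ g y : (Fin (n+1) → ℝ) →ₗ[ℝ] (Fin (n+1) → ℝ)))
        from (trace_pi _ _).symm, h2, LinearMap.trace_conj']
    rfl
  have hcomp : ∀ x, vdiv u x = (fun y => ∑ i, fderiv ℝ g y (Pi.single i 1) i)
      ((MeasurableEquiv.toLp 2 (Fin (n+1) → ℝ)).symm x) := by
    intro x
    have h1 : (MeasurableEquiv.toLp 2 (Fin (n+1) → ℝ)).symm x = eL x := rfl
    rw [h1]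
    have := htr (eL x)
    rw [eL.symm_apply_apply] at this
    exact this
  calc ∫ x, vdiv u x
      = ∫ x, (fun y => ∑ i, fderiv ℝ g y (Pi.single i 1) i)
          ((MeasurableEquiv.toLp 2 (Fin (n+1) → ℝ)).symm x) := by
        exact integral_congr_ae (Filter.Eventually.of_forall hcomp)
    _ = ∫ y, ∑ i, fderiv ℝ g y (Pi.single i 1) i := by
        exact (EuclideanSpace.volume_preserving_symm_measurableEquiv_toLp (Fin (n+1))).integral_comp
          (MeasurableEquiv.toLp 2 (Fin (n+1) → ℝ)).symm.measurableEmbedding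
          (fun y => ∑ i, fderiv ℝ g y (Pi.single i 1) i)
    _ = 0 := divclean n g hgc (eL '' K) (hK.image eL.continuous) hgK

/-- **Conservation of mass under the continuity equation.**
If `S` and `v` are `C¹`, `S(t,·)` is supported in a fixed compact set `K` for
`t ∈ [0,T]`, and the continuity equation `∂ₜS + div (S·v) = 0` holds on `[0,T] × E`,
then the total mass `t ↦ ∫ S(t,x) dx` is constant on `[0,T]`. -/
theorem mass_conservation (d : ℕ) (hd : 1 ≤ d) (T : ℝ) (hT : 0 < T)
    (S : ℝ × EuclideanSpace ℝ (Fin d) → ℝ)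
    (v : ℝ × EuclideanSpace ℝ (Fin d) → EuclideanSpace ℝ (Fin d))
    (hS : ContDiff ℝ 1 S) (hv : ContDiff ℝ 1 v)
    (K : Set (EuclideanSpace ℝ (Fin d))) (hK : IsCompact K)
    (hsupp : ∀ t ∈ Set.Icc (0 : ℝ) T, ∀ x ∉ K, S (t, x) = 0)
    (heq : ∀ t ∈ Set.Icc (0 : ℝ) T, ∀ x : EuclideanSpace ℝ (Fin d),
      deriv (fun r => S (r, x)) t + vdiv (fun y => S (t, y) • v (t, y)) x = 0) :
    ∀ t ∈ Set.Icc (0 : ℝ) T, ∀ s ∈ Set.Icc (0 : ℝ) T,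
      ∫ x, S (t, x) = ∫ x, S (s, x) := by
  obtain ⟨n, rfl⟩ : ∃ n, d = n + 1 := ⟨d - 1, (Nat.succ_pred_eq_of_pos hd).symm⟩
  set W : ℝ × EuclideanSpace ℝ (Fin (n+1)) → ℝ := fun p => fderiv ℝ S p ((1 : ℝ), (0 : EuclideanSpace ℝ (Fin (n+1)))) with hW
  have hWd : ∀ (t : ℝ) (x : EuclideanSpace ℝ (Fin (n+1))), HasDerivAt (fun r => S (r, x)) (W (t, x)) t := by
    intro t x
    have h1 : HasFDerivAt S (fderiv ℝ S (t, x)) (t, x) :=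
      (hS.differentiable one_ne_zero _).hasFDerivAt
    have h2 : HasDerivAt (fun r : ℝ => (r, x)) ((1 : ℝ), (0 : EuclideanSpace ℝ (Fin (n+1)))) t :=
      (hasDerivAt_id t).prodMk (hasDerivAt_const t x)
    exact h1.comp_hasDerivAt t h2
  have hWcont : Continuous W :=
    (hS.fderiv_right (m := 0) le_rfl).continuous.clm_apply continuous_const
  set G : ℝ → ℝ := fun t => ∫ x in K, S (t, x) with hG
  -- derivative of G
  have hGd : ∀ t₀ : ℝ, HasDerivAt G (∫ x in K, W (t₀, x)) t₀ := by
    intro t₀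
    obtain ⟨C, hC⟩ := (IsCompact.prod (isCompact_Icc (a := t₀ - 1) (b := t₀ + 1)) hK).exists_bound_of_continuousOn hWcont.continuousOn
    have := hasDerivAt_integral_of_dominated_loc_of_deriv_le (μ := volume.restrict K)
      (F := fun t x => S (t, x)) (F' := fun t x => W (t, x)) (bound := fun _ => C)
      (x₀ := t₀) (s := Metric.ball t₀ 1) (Metric.ball_mem_nhds t₀ one_pos)
      (Filter.Eventually.of_forall fun t =>
        ((hS.continuous.comp (Continuous.prodMk_right t)).aestronglyMeasurable).restrict)
      ((hS.continuous.comp (Continuous.prodMk_right t₀)).continuousOn.integrableOn_compact hK)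
      ((hWcont.comp (Continuous.prodMk_right t₀)).aestronglyMeasurable).restrict
      ?_ (integrableOn_const hK.measure_lt_top.ne) ?_
    · exact this.2
    · filter_upwards [ae_restrict_mem hK.measurableSet] with x hx
      intro t ht
      rw [Real.ball_eq_Ioo] at ht
      exact hC (t, x) ⟨⟨ht.1.le, ht.2.le⟩, hx⟩
    · exact Filter.Eventually.of_forall fun x t _ => hWd t x
  -- derivative is zero on [0,T]
  have hGz : ∀ t ∈ Set.Icc (0 : ℝ) T, HasDerivAt G 0 t := by
    intro t ht
    set u : EuclideanSpace ℝ (Fin (n+1)) → EuclideanSpace ℝ (Fin (n+1)) := fun y => S (t, y) • v (t, y) with hu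
    have hty : ContDiff ℝ 1 (fun y : EuclideanSpace ℝ (Fin (n+1)) => (t, y)) := contDiff_const.prodMk contDiff_id
    have huc : ContDiff ℝ 1 u := (hS.comp hty).smul (hv.comp hty)
    have hu0 : ∀ y ∉ K, u y = 0 := fun y hy => by simp [hu, hsupp t ht y hy]
    have hvd0 : ∀ y ∉ K, vdiv u y = 0 := by
      intro y hy
      have hev : u =ᶠ[nhds y] (fun _ => 0) := by
        filter_upwards [hK.isClosed.isOpen_compl.mem_nhds hy] with z hz
        exact hu0 z hz
      have : fderiv ℝ u y = 0 := by rw [hev.fderiv_eq]; exact fderiv_const_apply _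
      simp [vdiv, this]
    have hWeq : ∀ x : EuclideanSpace ℝ (Fin (n+1)), W (t, x) = - vdiv u x := by
      intro x
      have h1 := heq t ht x
      rw [(hWd t x).deriv] at h1
      linarith
    have hz : (∫ x in K, W (t, x)) = 0 := by
      rw [integral_congr_ae (Filter.Eventually.of_forall fun x => hWeq x), integral_neg,
        setIntegral_eq_integral_of_forall_compl_eq_zero (fun x hx => hvd0 x hx),
        divE u huc K hK hu0, neg_zero]
    exact hz ▸ hGd t
  have hGc : ∀ r ∈ Set.Icc (0:ℝ) T, G r = G 0 :=
    constant_of_has_deriv_right_zero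
      (fun r _ => (hGd r).continuousAt.continuousWithinAt)
      (fun r hr => (hGz r ⟨hr.1, hr.2.le⟩).hasDerivWithinAt)
  intro t ht s hs
  have hmass : ∀ r ∈ Set.Icc (0:ℝ) T, (∫ x, S (r, x)) = G r := fun r hr =>
    (setIntegral_eq_integral_of_forall_compl_eq_zero (fun x hx => hsupp r hr x hx)).symm
  rw [hmass t ht, hmass s hs, hGc t ht, hGc s hs]
end

section
/- Liouville's formula for the Jacobian of a flow: let d ≥ 1 and let A, B : ℝ → Matrix (Fin d) (Fin d) ℝ be such that HasDerivAt A (B t * A t) t for every t ∈ ℝ. Then for every t ∈ ℝ, HasDerivAt (fun s => (A s).det) ((B t).trace * (A t).det) t. (Applied with A(t) = Dφ(t,x) the spatial Jacobian of a flow of a velocity field v and B(t) = Dv(t, φ(t,x)), this says d/dt det Dφ(t,x) = div v(t, φ(t,x)) · det Dφ(t,x), the key identity relating the mass-preserving group action to the continuity equation.) -/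
attribute [local instance] Matrix.normedAddCommGroup Matrix.normedSpace

/-- **Liouville's formula for the Jacobian of a flow.**
If the matrix-valued function `A` satisfies `A' t = B t * A t`, then
`(det ∘ A)' t = trace (B t) * det (A t)`.  Applied with `A t = Dφ(t,x)` and
`B t = Dv(t, φ(t,x))`, this gives `d/dt det Dφ(t,x) = div v(t,φ(t,x)) · det Dφ(t,x)`. -/
theorem liouville_formula (d : ℕ) (hd : 1 ≤ d)
    (A B : ℝ → Matrix (Fin d) (Fin d) ℝ)
    (hA : ∀ t : ℝ, HasDerivAt A (B t * A t) t) :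
    ∀ t : ℝ, HasDerivAt (fun s => (A s).det) ((B t).trace * (A t).det) t := by
  intro t
  -- the determinant as a continuous multilinear map in the rows
  let f : ContinuousMultilinearMap ℝ (fun _ : Fin d => Fin d → ℝ) ℝ :=
    { toMultilinearMap := (Matrix.detRowAlternating :
        (Fin d → ℝ) [⋀^Fin d]→ₗ[ℝ] ℝ).toMultilinearMap
      cont := by
        have : Continuous fun M : Matrix (Fin d) (Fin d) ℝ => M.det :=
          continuous_id.matrix_det
        exact this }
  have hf : HasFDerivAt (fun M : Matrix (Fin d) (Fin d) ℝ => f M)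
      (f.linearDeriv (A t)) (A t) := f.hasFDerivAt (A t)
  have h := hf.comp_hasDerivAt t (hA t)
  simp only [Function.comp_def] at h
  have hfun : (fun s => f (A s)) = fun s => (A s).det := rfl
  rw [hfun] at h
  convert h using 1
  · rfl
  · rfl
  refine ((ContinuousMultilinearMap.linearDeriv_apply f (A t) (B t * A t)).trans ?_).symm
  have key : ∀ i : Fin d,
      f (Function.update (A t) i ((B t * A t) i)) = B t i i * (A t).det := by
    intro i
    have hrow : (B t * A t) i = ∑ j, B t i j • A t j := by
      funext k
      simp [Matrix.mul_apply, Finset.sum_apply]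
    have : f (Function.update (A t) i ((B t * A t) i))
        = ((A t).updateRow i (∑ j, B t i j • A t j)).det := by
      rw [hrow]; rfl
    rw [this, Matrix.det_updateRow_sum]
    simp
  rw [Finset.sum_congr rfl fun i _ => key i, ← Finset.sum_mul]
  simp [Matrix.trace, Matrix.diag]
end

section
/- Uniqueness for the transport equation via the flow: let v : ℝ → E → E and let φ : ℝ → E → E satisfy φ 0 x = x and HasDerivAt (fun t => φ t x) (v t (φ t x)) t for all t ∈ ℝ and x ∈ E, and assume that for every t the map x ↦ φ t x is surjective onto E. If S₁, S₂ : ℝ × E → ℝ are differentiable, both satisfy the optical flow constraint fderiv ℝ Sᵢ (t,y) (1, v t y) = 0 for all (t,y) ∈ ℝ × E, and agree at time zero, S₁ (0, x) = S₂ (0, x) for all x ∈ E, then S₁ = S₂ on all of ℝ × E. -/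
/-- **Uniqueness for the transport equation via the flow.**
Let `φ` be a flow of `v` whose time-`t` maps are surjective.  If `S₁, S₂` are
differentiable, both satisfy the optical flow constraint everywhere, and agree at time
zero, then `S₁ = S₂` on all of `ℝ × E`. -/
theorem transport_uniqueness (d : ℕ) (hd : 1 ≤ d)
    (v φ : ℝ → EuclideanSpace ℝ (Fin d) → EuclideanSpace ℝ (Fin d))
    (hφ0 : ∀ x, φ 0 x = x)
    (hφ : ∀ (t : ℝ) (x : EuclideanSpace ℝ (Fin d)),
      HasDerivAt (fun t => φ t x) (v t (φ t x)) t)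
    (hsurj : ∀ t : ℝ, Function.Surjective (φ t))
    (S₁ S₂ : ℝ × EuclideanSpace ℝ (Fin d) → ℝ)
    (h1 : Differentiable ℝ S₁) (h2 : Differentiable ℝ S₂)
    (hofc1 : ∀ (t : ℝ) (y : EuclideanSpace ℝ (Fin d)),
      fderiv ℝ S₁ (t, y) (1, v t y) = 0)
    (hofc2 : ∀ (t : ℝ) (y : EuclideanSpace ℝ (Fin d)),
      fderiv ℝ S₂ (t, y) (1, v t y) = 0)
    (h0 : ∀ x : EuclideanSpace ℝ (Fin d), S₁ (0, x) = S₂ (0, x)) :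
    ∀ p : ℝ × EuclideanSpace ℝ (Fin d), S₁ p = S₂ p := by
  -- It suffices to show S i is constant along the flow lines.
  have key : ∀ (S : ℝ × EuclideanSpace ℝ (Fin d) → ℝ), Differentiable ℝ S →
      (∀ (t : ℝ) (y : EuclideanSpace ℝ (Fin d)), fderiv ℝ S (t, y) (1, v t y) = 0) →
      ∀ (x : EuclideanSpace ℝ (Fin d)) (t : ℝ), S (t, φ t x) = S (0, x) := by
    intro S hS hofc x t
    have hconst : ∀ s : ℝ, HasDerivAt (fun s => S (s, φ s x)) 0 s := by
      intro s
      have hc : HasDerivAt (fun s : ℝ => ((s : ℝ), φ s x)) (1, v s (φ s x)) s :=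
        HasDerivAt.prodMk (hasDerivAt_id s) (hφ s x)
      have := (hS (s, φ s x)).hasFDerivAt.comp_hasDerivAt s hc
      simpa [hofc s (φ s x), Function.comp_def] using this
    have : (fun s => S (s, φ s x)) t = (fun s => S (s, φ s x)) 0 :=
      is_const_of_deriv_eq_zero (fun s => (hconst s).differentiableAt)
        (fun s => (hconst s).deriv) t 0
    simpa [hφ0 x] using this
  rintro ⟨t, y⟩
  obtain ⟨x, rfl⟩ := hsurj t y
  rw [key S₁ h1 hofc1 x t, key S₂ h2 hofc2 x t, h0]
end
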